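/- Let G be a commutative group, F a field, φ : ℤ[G] → F a ring homomorphism, H_1, …, H_k subgroups of G, and n a natural number. Consider the ℤ[G]-module M = ℤ[G]^n ⊕ ℤ[G/H_1] ⊕ ⋯ ⊕ ℤ[G/H_k], where each ℤ[G/H_i] is a ℤ[G]-module via the quotient homomorphism G → G/H_i. Then the F-vector space F ⊗_{ℤ[G]} M has dimension n + |{i ∈ {1,…,k} : φ(h) = 1 for all h ∈ H_i}|, and a basis is given by the images of the n standard free generators together with the elements (identity coset of G/H_i) ⊗ 1 for those indices i with φ trivial on H_i. -/

import Mathlib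

open scoped TensorProduct

noncomputable instance quotGroupRingModule {G : Type*} [CommGroup G] (H : Subgroup G) :
    Module (MonoidAlgebra ℤ G) (MonoidAlgebra ℤ (G ⧸ H)) :=
  Module.compHom _ (MonoidAlgebra.mapDomainRingHom ℤ (QuotientGroup.mk' H))

section Aux
variable {G : Type*} [CommGroup G] {F : Type*} [Field F] (φ : MonoidAlgebra ℤ G →+* F)

noncomputable def psiAux (H : Subgroup G) (hH : ∀ h ∈ H, φ (MonoidAlgebra.of ℤ G h) = 1) :
    MonoidAlgebra ℤ (G ⧸ H) →ₐ[ℤ] F :=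
  MonoidAlgebra.lift ℤ F (G ⧸ H)
    ((Units.coeHom F).comp (QuotientGroup.lift H
      ((φ.toMonoidHom.comp (MonoidAlgebra.of ℤ G)).toHomUnits)
      (fun h hh => Units.ext (by simpa using hH h hh))))

lemma psiAux_comp (H : Subgroup G) (hH : ∀ h ∈ H, φ (MonoidAlgebra.of ℤ G h) = 1)
    (r : MonoidAlgebra ℤ G) :
    psiAux φ H hH (MonoidAlgebra.mapDomainRingHom ℤ (QuotientGroup.mk' H) r) = φ r := by
  have : (psiAux φ H hH).comp (MonoidAlgebra.mapDomainAlgHom ℤ ℤ (QuotientGroup.mk' H))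
      = φ.toIntAlgHom := by
    apply MonoidAlgebra.algHom_ext
    intro x
    simp [psiAux, MonoidAlgebra.mapDomainAlgHom, MonoidAlgebra.mapDomainRingHom,
      MonoidAlgebra.mapDomain_single, MonoidAlgebra.lift_of]
    · rfl
    exact AlgHom.coe_ringHom_injective (R := ℤ) (A := ℤ) (B := F) (RingHom.ext_int _ _)
  exact congrArg (fun f => f r) (congrArg (fun (f : _ →ₐ[ℤ] F) => (f : _ → F)) this)

lemma psiAux_one (H : Subgroup G) (hH : ∀ h ∈ H, φ (MonoidAlgebra.of ℤ G h) = 1) :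
    psiAux φ H hH (MonoidAlgebra.single 1 1) = 1 := by
  rw [← MonoidAlgebra.one_def]
  exact map_one _

lemma mapDomain_mk'_surj (H : Subgroup G) :
    Function.Surjective (MonoidAlgebra.mapDomainRingHom ℤ (QuotientGroup.mk' H)) := by
  intro x
  induction x using MonoidAlgebra.induction with
  | zero => exact ⟨0, map_zero _⟩
  | single_add a b f _ _ ih =>
    obtain ⟨r, hr⟩ := ih
    obtain ⟨g, rfl⟩ := QuotientGroup.mk'_surjective H a
    refine ⟨(MonoidAlgebra.single g b + r : MonoidAlgebra ℤ G), ?_⟩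
    rw [map_add, hr]
    congr 1
    exact MonoidAlgebra.mapDomain_single

end Aux

set_option maxHeartbeats 1000000 in
set_option synthInstance.maxHeartbeats 400000 in
/-- Lemma 4.4 of the paper (algebraic content): for the `ℤ[G]`-module
`M = ℤ[G]ⁿ ⊕ ℤ[G/H₁] ⊕ ⋯ ⊕ ℤ[G/H_k]`, the `F`-vector space `F ⊗_{ℤ[G]} M` has dimension
`n + #{i : φ trivial on H i}`, with basis given by the images of the `n` standard free
generators together with the elements `(identity coset of G/H_i) ⊗ 1` for the indices `i`
with `φ` trivial on `H i`. -/
theorem stmt3 {G : Type*} [CommGroup G] {F : Type*} [Field F]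
    (φ : MonoidAlgebra ℤ G →+* F) (n k : ℕ) (H : Fin k → Subgroup G) :
    letI : Algebra (MonoidAlgebra ℤ G) F := φ.toAlgebra
    Module.finrank F (F ⊗[MonoidAlgebra ℤ G]
        ((Fin n → MonoidAlgebra ℤ G) × (∀ i : Fin k, MonoidAlgebra ℤ (G ⧸ H i))))
      = n + Nat.card {i : Fin k // ∀ h ∈ H i, φ (MonoidAlgebra.of ℤ G h) = 1} ∧
    ∃ b : Module.Basis (Fin n ⊕ {i : Fin k // ∀ h ∈ H i, φ (MonoidAlgebra.of ℤ G h) = 1}) F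
        (F ⊗[MonoidAlgebra ℤ G]
          ((Fin n → MonoidAlgebra ℤ G) × (∀ i : Fin k, MonoidAlgebra ℤ (G ⧸ H i)))),
      (∀ j : Fin n, b (Sum.inl j) = (1 : F) ⊗ₜ[MonoidAlgebra ℤ G]
        ((Pi.single j (1 : MonoidAlgebra ℤ G), 0) :
          (Fin n → MonoidAlgebra ℤ G) × (∀ i : Fin k, MonoidAlgebra ℤ (G ⧸ H i)))) ∧
      (∀ i : {i : Fin k // ∀ h ∈ H i, φ (MonoidAlgebra.of ℤ G h) = 1},
        b (Sum.inr i) = (1 : F) ⊗ₜ[MonoidAlgebra ℤ G]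
          ((0, Pi.single i.1 (MonoidAlgebra.of ℤ (G ⧸ H i.1) (1 : G ⧸ H i.1))) :
            (Fin n → MonoidAlgebra ℤ G) × (∀ i : Fin k, MonoidAlgebra ℤ (G ⧸ H i)))) := by
  classical
  letI : Algebra (MonoidAlgebra ℤ G) F := φ.toAlgebra
  set R := MonoidAlgebra ℤ G with hR
  set M := ((Fin n → R) × (∀ i : Fin k, MonoidAlgebra ℤ (G ⧸ H i))) with hM
  set P : Fin k → Prop := fun i => ∀ h ∈ H i, φ (MonoidAlgebra.of ℤ G h) = 1 with hP
  -- the linear map to the "model" space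
  let ψ : ∀ i : {i : Fin k // P i}, MonoidAlgebra ℤ (G ⧸ H i.1) →ₗ[R] F := fun i =>
    { toFun := psiAux φ (H i.1) i.2
      map_add' := fun x y => map_add _ x y
      map_smul' := fun r x => by
        show psiAux φ (H i.1) i.2 (MonoidAlgebra.mapDomainRingHom ℤ (QuotientGroup.mk' (H i.1)) r * x) = r • _
        rw [map_mul, psiAux_comp, Algebra.smul_def]
        rfl }
  let f : M →ₗ[R] (Fin n → F) × ({i : Fin k // P i} → F) :=
    LinearMap.prodMap
      (LinearMap.pi fun j => (Algebra.linearMap R F).comp (LinearMap.proj j))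
      (LinearMap.pi fun i : {i : Fin k // P i} => (ψ i).comp (LinearMap.proj i.1))
  let g := f.liftBaseChange F
  let s : Fin n ⊕ {i : Fin k // P i} → F ⊗[R] M :=
    Sum.elim (fun j => (1 : F) ⊗ₜ[R] ((Pi.single j 1, 0) : M))
      (fun i => (1 : F) ⊗ₜ[R] ((0, Pi.single i.1 (MonoidAlgebra.of ℤ (G ⧸ H i.1) 1)) : M))
  let bN : Module.Basis (Fin n ⊕ {i : Fin k // P i}) F ((Fin n → F) × ({i : Fin k // P i} → F)) :=
    (Pi.basisFun F (Fin n)).prod (Pi.basisFun F {i : Fin k // P i})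
  have hf : ∀ m : M, f m = (fun j => φ (m.1 j), fun i : {i : Fin k // P i} => psiAux φ (H i.1) i.2 (m.2 i.1)) := fun m => rfl
  have hg : ∀ (c : F) (m : M), g (c ⊗ₜ[R] m) = c • f m := fun c m => rfl
  have hcomp : ∀ x, g (s x) = bN x := by
    rintro (j | i)
    · rw [show s (Sum.inl j) = (1 : F) ⊗ₜ[R] ((Pi.single j 1, 0) : M) from rfl, hg, one_smul, hf]
      refine Prod.ext ?_ ?_
      · rw [Module.Basis.prod_apply_inl_fst, Pi.basisFun_apply]
        funext j'
        rcases eq_or_ne j' j with rfl | hne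
        · simp
        · simp [Pi.single_apply, hne]
      · rw [Module.Basis.prod_apply_inl_snd]
        funext i
        simp only [Pi.zero_apply]
        exact map_zero (psiAux φ (H i.1) i.2)
    · rw [show s (Sum.inr i) = (1 : F) ⊗ₜ[R] ((0, Pi.single i.1 (MonoidAlgebra.of ℤ (G ⧸ H i.1) 1)) : M) from rfl, hg, one_smul, hf]
      refine Prod.ext ?_ ?_
      · rw [Module.Basis.prod_apply_inr_fst]
        funext j'
        simp
      · rw [Module.Basis.prod_apply_inr_snd, Pi.basisFun_apply]
        funext i'
        rcases eq_or_ne i' i with rfl | hne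
        · simp only [Pi.single_eq_same]
          exact psiAux_one φ (H i'.1) i'.2
        · have h1 : i'.1 ≠ i.1 := fun h => hne (Subtype.ext h)
          simp only [Pi.single_eq_of_ne h1, Pi.single_eq_of_ne hne]
          exact map_zero (psiAux φ (H i'.1) i'.2)
  have hsmul : ∀ (r : R) (c : F), r • c = φ r * c := fun r c => Algebra.smul_def r c
  have htmul : ∀ (c : F) (r : R) (m : M),
      c ⊗ₜ[R] (r • m) = (φ r * c) • ((1:F) ⊗ₜ[R] m) := by
    intro c r m
    calc c ⊗ₜ[R] (r • m) = (r • c) ⊗ₜ[R] m := (TensorProduct.smul_tmul r c m).symm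
      _ = (φ r * c) ⊗ₜ[R] m := by rw [hsmul]
      _ = (φ r * c) • ((1:F) ⊗ₜ[R] m) := by
          rw [TensorProduct.smul_tmul', smul_eq_mul, mul_one]
  have hfree : ∀ (c : F) (v : Fin n → R),
      c ⊗ₜ[R] ((v, 0) : M) ∈ Submodule.span F (Set.range s) := by
    intro c v
    have hv : ((v, 0) : M) = ∑ j, (v j) • ((Pi.single j 1, 0) : M) := by
      have h1 : ∀ j : Fin n, (v j) • ((Pi.single j 1, 0) : M)
          = ((Pi.single j (v j) : Fin n → R), 0) := by
        intro j
        refine Prod.ext ?_ (smul_zero _)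
        show v j • Pi.single (M := fun _ : Fin n => R) j 1
          = Pi.single (M := fun _ : Fin n => R) j (v j)
        rw [← Pi.single_smul, smul_eq_mul, mul_one]
      simp only [h1]
      refine Prod.ext ?_ ?_
      · rw [Prod.fst_sum]
        exact (Finset.univ_sum_single v).symm
      · rw [Prod.snd_sum]
        simp
    rw [hv, TensorProduct.tmul_sum]
    refine Submodule.sum_mem _ fun j _ => ?_
    rw [htmul]
    exact Submodule.smul_mem _ _ (Submodule.subset_span ⟨Sum.inl j, rfl⟩)
  have hquot : ∀ (c : F) (i : Fin k) (x : MonoidAlgebra ℤ (G ⧸ H i)),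
      c ⊗ₜ[R] ((0, Pi.single i x) : M) ∈ Submodule.span F (Set.range s) := by
    intro c i x
    by_cases hPi : ∀ h ∈ H i, φ (MonoidAlgebra.of ℤ G h) = 1
    · obtain ⟨r, hr⟩ := mapDomain_mk'_surj (G := G) (H i) x
      have hone : MonoidAlgebra.of ℤ (G ⧸ H i) 1 = 1 := map_one _
      have hx : ((0, Pi.single i x) : M)
          = r • ((0, Pi.single i (MonoidAlgebra.of ℤ (G ⧸ H i) 1)) : M) := by
        refine Prod.ext (by simp) ?_
        show Pi.single i x = r • Pi.single (M := fun i' : Fin k => MonoidAlgebra ℤ (G ⧸ H i')) i (MonoidAlgebra.of ℤ (G ⧸ H i) 1)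
        rw [← Pi.single_smul]
        have hx2 : x = r • (MonoidAlgebra.of ℤ (G ⧸ H i) 1) := by
          show x = MonoidAlgebra.mapDomainRingHom ℤ (QuotientGroup.mk' (H i)) r
            * MonoidAlgebra.of ℤ (G ⧸ H i) 1
          rw [hone, mul_one, hr]
        rw [hx2]
      rw [hx, htmul]
      exact Submodule.smul_mem _ _ (Submodule.subset_span ⟨Sum.inr ⟨i, hPi⟩, rfl⟩)
    · push_neg at hPi
      obtain ⟨h, hh, hne⟩ := hPi
      have h1 : (MonoidAlgebra.of ℤ G h : R) • ((0, Pi.single i x) : M)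
          = (0, Pi.single i x) := by
        refine Prod.ext (smul_zero _) ?_
        show (MonoidAlgebra.of ℤ G h : R) • Pi.single (M := fun i' : Fin k => MonoidAlgebra ℤ (G ⧸ H i')) i x = Pi.single i x
        rw [← Pi.single_smul]
        have hx3 : (MonoidAlgebra.of ℤ G h : R) • x = x := by
          show MonoidAlgebra.mapDomainRingHom ℤ (QuotientGroup.mk' (H i))
            (MonoidAlgebra.of ℤ G h) * x = x
          have hmd : MonoidAlgebra.mapDomainRingHom ℤ (QuotientGroup.mk' (H i))
              (MonoidAlgebra.of ℤ G h)
              = MonoidAlgebra.single ((QuotientGroup.mk' (H i)) h) (1:ℤ) :=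
            MonoidAlgebra.mapDomain_single
          rw [hmd, show ((QuotientGroup.mk' (H i)) h : G ⧸ H i) = 1 from
            (QuotientGroup.eq_one_iff h).mpr hh, ← MonoidAlgebra.one_def, one_mul]
        rw [hx3]
      have h2 : c ⊗ₜ[R] ((0, Pi.single i x) : M)
          = φ (MonoidAlgebra.of ℤ G h) • (c ⊗ₜ[R] ((0, Pi.single i x) : M)) := by
        conv_lhs => rw [← h1]
        rw [htmul, mul_smul]
        congr 1
        rw [TensorProduct.smul_tmul', smul_eq_mul, mul_one]
      have h4 : c ⊗ₜ[R] ((0, Pi.single i x) : M) = 0 := by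
        by_contra ht
        have h5 : φ (MonoidAlgebra.of ℤ G h) • (c ⊗ₜ[R] ((0, Pi.single i x) : M))
            = (1:F) • (c ⊗ₜ[R] ((0, Pi.single i x) : M)) := by
          rw [one_smul, ← h2]
        exact hne (smul_left_injective F ht h5)
      rw [h4]
      exact zero_mem _
  have hspan : ⊤ ≤ Submodule.span F (Set.range s) := by
    rintro z -
    induction z using TensorProduct.induction_on with
    | zero => exact zero_mem _
    | add x y hx hy => exact add_mem hx hy
    | tmul c m =>
      obtain ⟨v, w⟩ := m
      have hm : ((v, w) : M) = (v, 0) + (0, w) := by simp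
      rw [hm, TensorProduct.tmul_add]
      refine add_mem (hfree c v) ?_
      have hw : ((0, w) : M) = ∑ i, ((0, Pi.single i (w i)) : M) := by
        refine Prod.ext ?_ ?_
        · rw [Prod.fst_sum]
          simp
        · rw [Prod.snd_sum]
          exact (Finset.univ_sum_single w).symm
      rw [hw, TensorProduct.tmul_sum]
      exact Submodule.sum_mem _ fun i _ => hquot c i (w i)
  have hgs : ⇑g ∘ s = ⇑bN := funext hcomp
  have hindep : LinearIndependent F s :=
    LinearIndependent.of_comp g (by rw [hgs]; exact bN.linearIndependent)
  haveI : Fintype {i : Fin k // P i} := Fintype.ofFinite _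
  refine ⟨?_, ⟨Module.Basis.mk hindep hspan, ?_, ?_⟩⟩
  · rw [Module.finrank_eq_card_basis (Module.Basis.mk hindep hspan), Fintype.card_sum,
      Fintype.card_fin, Nat.card_eq_fintype_card]
  · intro j
    exact Module.Basis.mk_apply hindep hspan (Sum.inl j)
  · intro i
    exact Module.Basis.mk_apply hindep hspan (Sum.inr i)
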